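/- arXiv:math-ph/0512008 — 2 statements merged into one kernel-verified Lean document; each statement's English description precedes it below -/
import Mathlib

section
/- Let γ_1, …, γ_k be linearly independent vectors in R^d with |γ_j| ≤ M for all j, spanning the subspace P = Span{γ_1,…,γ_k}. If x ∈ R^d satisfies |(x, γ_j)| ≤ E for all j = 1,…,k (up to the quadratic correction: |2(x,γ_j)+|γ_j|^2| ≤ E), then the orthogonal projection v of x onto P satisfies |v| ≤ C(k) (E + M^2) M^{k-1} / det_P, where det_P is the k-dimensional volume of the parallelepiped spanned by γ_1,…,γ_k. -/
open Finset in
lemma det_le_col {k : ℕ} (A : Matrix (Fin k) (Fin k) ℝ) (f : Fin k → ℝ)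
    (hf : ∀ i j, |A i j| ≤ f j) :
    |A.det| ≤ (k.factorial : ℝ) * ∏ j, f j := by
  calc |A.det| = |∑ σ : Equiv.Perm (Fin k), Equiv.Perm.sign σ • ∏ i, A (σ i) i| := by
        rw [Matrix.det_apply]
    _ ≤ ∑ σ : Equiv.Perm (Fin k), |Equiv.Perm.sign σ • ∏ i, A (σ i) i| :=
        Finset.abs_sum_le_sum_abs _ _
    _ ≤ ∑ _σ : Equiv.Perm (Fin k), ∏ j, f j := by
        refine Finset.sum_le_sum fun σ _ => ?_
        have h2 : |∏ i, A (σ i) i| ≤ ∏ j, f j := by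
          rw [Finset.abs_prod]
          exact Finset.prod_le_prod (fun i _ => abs_nonneg _) (fun i _ => hf _ _)
        rcases Int.units_eq_one_or (Equiv.Perm.sign σ) with h | h <;>
          simp only [h, one_smul, Units.neg_smul, abs_neg] <;> exact h2
    _ = (k.factorial : ℝ) * ∏ j, f j := by
        rw [Finset.sum_const, Finset.card_univ, Fintype.card_perm, Fintype.card_fin,
          nsmul_eq_mul]



set_option maxHeartbeats 1000000 in
/-- projection estimate. If `γ_1,…,γ_k` are linearly independent with
`|γ_j| ≤ M` and `|2(x,γ_j) + |γ_j|²| ≤ E` for all `j`, then the orthogonal projection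
`v` of `x` onto `P = Span{γ_1,…,γ_k}` satisfies
`|v| ≤ C(k) (E + M²) M^{k-1} / det_P`, where `det_P` is the `k`-dimensional volume of
the parallelepiped spanned by the `γ_j` (the square root of the Gram determinant). -/
theorem projection_estimate (k : ℕ) :
    ∃ C : ℝ, 0 < C ∧ ∀ (d : ℕ) (M E : ℝ), 0 ≤ E →
      ∀ (γ : Fin k → EuclideanSpace ℝ (Fin d)), LinearIndependent ℝ γ →
        (∀ j, ‖γ j‖ ≤ M) →
        ∀ x : EuclideanSpace ℝ (Fin d),
          (∀ j, |2 * (inner ℝ x (γ j) : ℝ) + ‖γ j‖ ^ 2| ≤ E) →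
          ‖(Submodule.orthogonalProjection (Submodule.span ℝ (Set.range γ)) x :
              EuclideanSpace ℝ (Fin d))‖ ≤
            C * (E + M ^ 2) * M ^ (k - 1) /
              Real.sqrt ((Matrix.of fun i j => (inner ℝ (γ i) (γ j) : ℝ)).det) := by
  refine ⟨(k : ℝ) * k.factorial + 1, by positivity, ?_⟩
  set C : ℝ := (k : ℝ) * k.factorial + 1 with hC
  intro d M E hE γ hli hM x hx
  set K := Submodule.span ℝ (Set.range γ) with hK
  set v : EuclideanSpace ℝ (Fin d) := (Submodule.orthogonalProjection K x : EuclideanSpace ℝ (Fin d)) with hv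
  set G : Matrix (Fin k) (Fin k) ℝ := Matrix.of fun i j => (inner ℝ (γ i) (γ j) : ℝ) with hG
  rcases Nat.eq_zero_or_pos k with hk | hk
  · -- k = 0 case
    subst hk
    have hKbot : K = ⊥ := by
      rw [hK, Set.range_eq_empty, Submodule.span_empty]
    have hv0 : v = 0 := by
      rw [hv, hKbot]
      simp
    rw [hv0, norm_zero]
    have hdet : G.det = 1 := Matrix.det_fin_zero
    rw [hdet, Real.sqrt_one]
    have : (0:ℝ) ≤ C * (E + M ^ 2) * M ^ (0 - 1) := by
      have : M ^ (0 - 1) = 1 := pow_zero M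
      rw [this, mul_one]
      have : (0:ℝ) < C := by rw [hC]; positivity
      nlinarith [sq_nonneg M]
    rw [div_one]
    exact this
  · -- main case
    have hM0 : 0 ≤ M := le_trans (norm_nonneg _) (hM ⟨0, hk⟩)
    -- Gram matrix is positive definite
    have hGpd : G.PosDef := by
      refine Matrix.posDef_iff_dotProduct_mulVec.mpr ⟨?_, ?_⟩
      · ext i j
        simp only [Matrix.conjTranspose_apply, hG, Matrix.of_apply, star_trivial]
        exact real_inner_comm (γ i) (γ j)
      · intro y hy
        have hsum : dotProduct (star y) (G.mulVec y) = ‖∑ i, y i • γ i‖ ^ 2 := by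
          rw [← real_inner_self_eq_norm_sq]
          simp only [dotProduct, Matrix.mulVec, star_trivial, dotProduct, hG,
            Matrix.of_apply]
          rw [sum_inner]
          refine Finset.sum_congr rfl fun i _ => ?_
          rw [real_inner_smul_left, inner_sum]
          congr 1
          refine Finset.sum_congr rfl fun j _ => ?_
          rw [real_inner_smul_right]
          ring
        rw [show dotProduct (star y) (G.mulVec y) = ‖∑ i, y i • γ i‖ ^ 2 from hsum]
        have hne : ∑ i, y i • γ i ≠ 0 := by
          intro h
          exact hy (funext fun i => Fintype.linearIndependent_iff.mp hli y h i)
        exact pow_pos (norm_pos_iff.mpr hne) 2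
    have hdet : 0 < G.det := hGpd.det_pos
    -- the coefficients
    obtain ⟨c, hc⟩ := Submodule.mem_span_range_iff_exists_fun ℝ |>.mp
      (SetLike.coe_mem (Submodule.orthogonalProjection K x))
    -- b
    set b : Fin k → ℝ := fun j => (inner ℝ x (γ j) : ℝ) with hb
    have hvb : ∀ j, (inner ℝ v (γ j) : ℝ) = b j := by
      intro j
      have hmem : γ j ∈ K := Submodule.subset_span (Set.mem_range_self j)
      have horth : x - v ∈ Kᗮ := K.sub_starProjection_mem_orthogonal x
      have h0 : (inner ℝ (x - v) (γ j) : ℝ) = 0 :=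
        Submodule.inner_left_of_mem_orthogonal hmem horth
      rw [inner_sub_left] at h0
      rw [hb]
      linarith [h0]
    have hGc : G.mulVec c = b := by
      funext i
      have : (G.mulVec c) i = (inner ℝ (γ i) (∑ j, c j • γ j) : ℝ) := by
        rw [inner_sum]
        simp only [Matrix.mulVec, dotProduct, hG, Matrix.of_apply]
        refine Finset.sum_congr rfl fun j _ => ?_
        rw [real_inner_smul_right]
        ring
      rw [this, hc, real_inner_comm, hvb i]
    -- Cramer
    have hcram : G.det • c = Matrix.cramer G b := by
      have hinj : Function.Injective (G.mulVec) :=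
        Matrix.mulVec_injective_iff_isUnit.mpr
          ((Matrix.isUnit_iff_isUnit_det G).mpr (isUnit_iff_ne_zero.mpr hdet.ne'))
      apply hinj
      rw [Matrix.mulVec_smul, hGc, Matrix.mulVec_cramer]
    set β : ℝ := (E + M ^ 2) / 2 with hβ
    have hβ0 : (0:ℝ) ≤ β := by rw [hβ]; positivity
    have hbb : ∀ j, |b j| ≤ β := by
      intro j
      have h1 := hx j
      have h2 : ‖γ j‖ ^ 2 ≤ M ^ 2 := by
        have := hM j
        nlinarith [norm_nonneg (γ j)]
      have h3 : |2 * b j| ≤ E + M ^ 2 := by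
        have : 2 * b j = (2 * b j + ‖γ j‖ ^ 2) - ‖γ j‖ ^ 2 := by ring
        rw [this]
        calc |(2 * b j + ‖γ j‖ ^ 2) - ‖γ j‖ ^ 2| ≤ |2 * b j + ‖γ j‖ ^ 2| + |‖γ j‖ ^ 2| :=
              abs_sub _ _
          _ ≤ E + M ^ 2 := by
              rw [abs_of_nonneg (by positivity : (0:ℝ) ≤ ‖γ j‖ ^ 2)]
              linarith
      rw [abs_mul, abs_two] at h3
      rw [hβ]; linarith
    have hGe : ∀ i j, |G i j| ≤ M ^ 2 := by
      intro i j
      have := abs_real_inner_le_norm (γ i) (γ j)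
      have h2 : ‖γ i‖ * ‖γ j‖ ≤ M * M :=
        mul_le_mul (hM i) (hM j) (norm_nonneg _) hM0
      simp only [hG, Matrix.of_apply]
      calc |(inner ℝ (γ i) (γ j) : ℝ)| ≤ ‖γ i‖ * ‖γ j‖ := this
        _ ≤ M ^ 2 := by nlinarith
    -- bound on |c j| * det
    set Q : ℝ := (k.factorial : ℝ) * (β * (M ^ 2) ^ (k - 1)) with hQ
    have hQ0 : 0 ≤ Q := by rw [hQ]; positivity
    have hcj : ∀ j, |c j| * G.det ≤ Q := by
      intro j
      have h1 : G.det * c j = (G.updateCol j b).det := by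
        have := congrFun hcram j
        simp only [Pi.smul_apply, smul_eq_mul] at this
        rw [this, Matrix.cramer_apply]
      set f : Fin k → ℝ := fun j' => if j' = j then β else M ^ 2 with hf
      have hent : ∀ i j', |(G.updateCol j b) i j'| ≤ f j' := by
        intro i j'
        rw [Matrix.updateCol_apply, hf]
        by_cases h : j' = j <;> simp [h, hbb i, hGe i j']
      have hbd := det_le_col (G.updateCol j b) f hent
      have hprod : ∏ j', f j' = β * (M ^ 2) ^ (k - 1) := by
        rw [← Finset.mul_prod_erase Finset.univ f (Finset.mem_univ j)]
        simp only [hf, if_pos rfl]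
        congr 1
        rw [Finset.prod_congr rfl (fun j' hj' => if_neg (Finset.mem_erase.mp hj').1),
          Finset.prod_const, Finset.card_erase_of_mem (Finset.mem_univ j),
          Finset.card_univ, Fintype.card_fin]
      calc |c j| * G.det = |G.det * c j| := by
            rw [abs_mul, abs_of_pos hdet]; ring
        _ ≤ (k.factorial : ℝ) * ∏ j', f j' := by rw [h1]; exact hbd
        _ = Q := by rw [hprod, hQ]
    have hcabs : ∀ j, |c j| ≤ Q / G.det := fun j => (le_div_iff₀ hdet).mpr (hcj j)
    -- norm squared
    have hv2 : ‖v‖ ^ 2 = ∑ j, c j * b j := by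
      rw [← real_inner_self_eq_norm_sq]
      have hc' : ∑ i, c i • γ i = v := hc
      nth_rewrite 1 [← hc']
      rw [sum_inner]
      refine Finset.sum_congr rfl fun j _ => ?_
      rw [real_inner_smul_left, real_inner_comm, hvb j]
    have hv2le : ‖v‖ ^ 2 ≤ (k : ℝ) * (Q / G.det * β) := by
      rw [hv2]
      calc ∑ j, c j * b j ≤ ∑ j, |c j * b j| :=
            Finset.sum_le_sum fun j _ => le_abs_self _
        _ ≤ ∑ _j : Fin k, Q / G.det * β := by
            refine Finset.sum_le_sum fun j _ => ?_
            rw [abs_mul]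
            exact mul_le_mul (hcabs j) (hbb j) (abs_nonneg _) (by positivity)
        _ = (k : ℝ) * (Q / G.det * β) := by
            rw [Finset.sum_const, Finset.card_univ, Fintype.card_fin, nsmul_eq_mul]
    -- final
    set a : ℝ := C * (E + M ^ 2) * M ^ (k - 1) with ha
    have ha0 : 0 ≤ a := by
      rw [ha]
      have hC0 : (0:ℝ) < C := by rw [hC]; positivity
      have : (0:ℝ) ≤ E + M ^ 2 := by positivity
      have := pow_nonneg hM0 (k - 1)
      positivity
    have hnum : (k : ℝ) * Q * β ≤ a ^ 2 := by
      have hP : (M ^ 2) ^ (k - 1) = (M ^ (k - 1)) ^ 2 := by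
        rw [← pow_mul, ← pow_mul, mul_comm]
      have hβle : β ≤ E + M ^ 2 := by rw [hβ]; linarith [hβ0]
      have hkey : (k : ℝ) * k.factorial ≤ C ^ 2 := by
        have h0 : (0:ℝ) ≤ (k : ℝ) * k.factorial := by positivity
        rw [hC]
        nlinarith [h0]
      have hstep1 : (k : ℝ) * k.factorial * β ^ 2 ≤ C ^ 2 * (E + M ^ 2) ^ 2 := by
        have hβ2 : β ^ 2 ≤ (E + M ^ 2) ^ 2 := by nlinarith
        exact mul_le_mul hkey hβ2 (sq_nonneg _) (sq_nonneg _)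
      calc (k : ℝ) * Q * β = ((k : ℝ) * k.factorial * β ^ 2) * (M ^ (k - 1)) ^ 2 := by
            rw [hQ, hP]; ring
        _ ≤ (C ^ 2 * (E + M ^ 2) ^ 2) * (M ^ (k - 1)) ^ 2 :=
            mul_le_mul_of_nonneg_right hstep1 (sq_nonneg _)
        _ = a ^ 2 := by rw [ha]; ring
    have hfin : ‖v‖ ^ 2 ≤ a ^ 2 / G.det := by
      refine le_trans hv2le ?_
      have heq : (k : ℝ) * (Q / G.det * β) = (k : ℝ) * Q * β / G.det := by
        field_simp
      rw [heq]
      gcongr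
    calc ‖v‖ = Real.sqrt (‖v‖ ^ 2) := (Real.sqrt_sq (norm_nonneg v)).symm
      _ ≤ Real.sqrt (a ^ 2 / G.det) := Real.sqrt_le_sqrt hfin
      _ = a / Real.sqrt G.det := by
          rw [Real.sqrt_div (sq_nonneg a), Real.sqrt_sq ha0]
end

section
/- Let γ_1, …, γ_d be linearly independent vectors of a lattice Γ with |γ_j| < p ρ^α, and let α_d = 3^d α where α = 1/(3^d+d+2). For ρ sufficiently large, the intersection ∩_{j=1}^d V^1_{γ_j}(ρ^{α_d}) ∩ B(ρ) is empty, where V^1_γ(δ) = {x : ||x|^2 − |x+γ|^2| < δ} and B(ρ) = {x : |x| = ρ}. -/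
open Matrix in
lemma aux_det_abs_le {d : ℕ} (M : Matrix (Fin d) (Fin d) ℝ) (K : ℝ)
    (h : ∀ i j, |M i j| ≤ K) : |M.det| ≤ (d.factorial : ℝ) * K ^ d := by
  rw [Matrix.det_apply']
  calc |∑ σ : Equiv.Perm (Fin d), ((Equiv.Perm.sign σ : ℤ) : ℝ) * ∏ i, M (σ i) i|
      ≤ ∑ σ : Equiv.Perm (Fin d), |((Equiv.Perm.sign σ : ℤ) : ℝ) * ∏ i, M (σ i) i| :=
        Finset.abs_sum_le_sum_abs _ _
    _ ≤ ∑ _σ : Equiv.Perm (Fin d), K ^ d := by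
        apply Finset.sum_le_sum
        intro σ _
        rw [abs_mul]
        have h1 : |((Equiv.Perm.sign σ : ℤ) : ℝ)| = 1 := by
          rcases Int.units_eq_one_or (Equiv.Perm.sign σ) with h' | h' <;> rw [h'] <;> norm_num
        rw [h1, one_mul, Finset.abs_prod]
        calc ∏ i, |M (σ i) i| ≤ ∏ _i : Fin d, K :=
              Finset.prod_le_prod (fun i _ => abs_nonneg _) (fun i _ => h _ _)
          _ = K ^ d := by simp
    _ = (d.factorial : ℝ) * K ^ d := by
        rw [Finset.sum_const, Finset.card_univ, Fintype.card_perm, Fintype.card_fin, nsmul_eq_mul]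

lemma aux_adj_abs_le {d : ℕ} (M : Matrix (Fin d) (Fin d) ℝ) (K : ℝ) (hK : 1 ≤ K)
    (h : ∀ i j, |M i j| ≤ K) (i j : Fin d) :
    |M.adjugate i j| ≤ (d.factorial : ℝ) * K ^ d := by
  rw [Matrix.adjugate_apply]
  apply aux_det_abs_le
  intro a b
  rw [Matrix.updateRow_apply]
  split
  · by_cases hb : b = i <;> simp [Pi.single_apply, hb] <;> linarith
  · exact h a b

lemma aux_sum_coord {d m : ℕ} (v : Fin m → ℝ) (y : Fin m → EuclideanSpace ℝ (Fin d)) (k : Fin d) :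
    (∑ j, v j • y j) k = ∑ j, v j * y j k := by
  have := map_sum (PiLp.proj (𝕜 := ℝ) 2 (fun _ : Fin d => ℝ) k) (fun j => v j • y j) Finset.univ
  simp only [PiLp.proj_apply, map_smul, smul_eq_mul] at this
  exact this

lemma aux_coord_le_norm {d : ℕ} (y : EuclideanSpace ℝ (Fin d)) (k : Fin d) : |y k| ≤ ‖y‖ := by
  rw [EuclideanSpace.norm_eq, ← Real.sqrt_sq_eq_abs]
  apply Real.sqrt_le_sqrt
  calc (y k) ^ 2 ≤ ∑ i, (y i) ^ 2 :=
        Finset.single_le_sum (fun i _ => sq_nonneg (y i)) (Finset.mem_univ k)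
    _ = ∑ i, ‖y i‖ ^ 2 := by simp [Real.norm_eq_abs, sq_abs]

lemma aux_det_ne_zero {d : ℕ} (y : Fin d → EuclideanSpace ℝ (Fin d))
    (h : LinearIndependent ℝ y) : (Matrix.of fun j k => y j k).det ≠ 0 := by
  intro h0
  obtain ⟨v, hv0, hv⟩ := Matrix.exists_vecMul_eq_zero_iff.mpr h0
  apply hv0
  have h1 := Fintype.linearIndependent_iff.mp h
  have hz : ∑ j, v j • y j = 0 := by
    ext k
    rw [aux_sum_coord]
    have h2 := congrFun hv k
    simpa [Matrix.vecMul, dotProduct] using h2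
  funext j
  exact h1 v hz j

set_option maxHeartbeats 1000000 in
/-- with `α = 1/(3^d+d+2)` and `α_d = 3^d α`, for `ρ` sufficiently
large, there is no `x` with `|x| = ρ` lying in `∩_{j=1}^d V¹_{γ_j}(ρ^{α_d})` for
linearly independent lattice vectors `γ_1,…,γ_d` with `|γ_j| < pρ^α`. -/
theorem full_intersection_empty
    (d : ℕ) (hd : 2 ≤ d) (B : Module.Basis (Fin d) ℝ (EuclideanSpace ℝ (Fin d)))
    (p : ℝ) (hp : 0 < p) :
    ∃ ρ₀ : ℝ, ∀ ρ : ℝ, ρ₀ ≤ ρ →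
      ∀ n : Fin d → (Fin d → ℤ),
        LinearIndependent ℝ (fun j => ∑ i, (n j i : ℝ) • B i) →
        (∀ j, ‖∑ i, (n j i : ℝ) • B i‖ < p * ρ ^ ((1 : ℝ) / (3 ^ d + d + 2))) →
        ∀ x : EuclideanSpace ℝ (Fin d), ‖x‖ = ρ →
          ¬ (∀ j, |‖x‖ ^ 2 - ‖x + ∑ i, (n j i : ℝ) • B i‖ ^ 2| <
              ρ ^ ((3 : ℝ) ^ d * ((1 : ℝ) / (3 ^ d + d + 2)))) := by
  classical
  set α : ℝ := (1 : ℝ) / (3 ^ d + d + 2) with hαdef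
  have hT : (0:ℝ) < 3 ^ d + d + 2 := by positivity
  have hα : 0 < α := by rw [hαdef]; positivity
  set Bm : Matrix (Fin d) (Fin d) ℝ := Matrix.of (fun i k => B i k) with hBm
  have hBdet : Bm.det ≠ 0 := by rw [hBm]; exact aux_det_ne_zero B B.linearIndependent
  set c : ℝ := |Bm.det| with hcdef
  have hc0 : 0 < c := abs_pos.mpr hBdet
  set Const : ℝ := Real.sqrt d * d * d.factorial * ((p+1)^d * (1+p^2)) / c with hConstdef
  have hConst0 : 0 < Const := by
    rw [hConstdef]
    have hdpos : (0:ℝ) < d := by exact_mod_cast Nat.pos_of_ne_zero (by omega)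
    have h1 : (0:ℝ) < Real.sqrt d := Real.sqrt_pos.mpr hdpos
    have h2 : (0:ℝ) < (d.factorial : ℝ) := by exact_mod_cast Nat.factorial_pos d
    have h3 : (0:ℝ) < (p+1)^d * (1+p^2) := by positivity
    exact div_pos (mul_pos (mul_pos (mul_pos h1 hdpos) h2) h3) hc0
  refine ⟨max 1 ((Const + 1) ^ ((1:ℝ)/(2*α))), ?_⟩
  intro ρ hρ n hli hnorm x hx hV
  have hρ1 : 1 ≤ ρ := le_trans (le_max_left _ _) hρ
  have hρ0 : 0 < ρ := lt_of_lt_of_le one_pos hρ1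
  have hρa0 : 0 < ρ ^ α := Real.rpow_pos_of_pos hρ0 _
  have hρad0 : 0 < ρ ^ ((3:ℝ)^d * α) := Real.rpow_pos_of_pos hρ0 _
  set g : Fin d → EuclideanSpace ℝ (Fin d) := fun j => ∑ i, (n j i : ℝ) • B i with hg
  have hVg : ∀ j, |‖x‖ ^ 2 - ‖x + g j‖ ^ 2| < ρ ^ ((3:ℝ)^d * α) := by
    simp only [hg]; exact hV
  have hnormg : ∀ j, ‖g j‖ < p * ρ ^ α := by simp only [hg]; exact hnorm
  have hlig : LinearIndependent ℝ g := hli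
  set A : Matrix (Fin d) (Fin d) ℝ := Matrix.of (fun j k => g j k) with hA
  set nM : Matrix (Fin d) (Fin d) ℝ := Matrix.of (fun j i => (n j i : ℝ)) with hnM
  have hgk : ∀ j k, g j k = ∑ i, (n j i : ℝ) * B i k := by
    intro j k; rw [hg]; exact aux_sum_coord _ _ _
  have hAmul : A = nM * Bm := by
    ext j k
    rw [hA, hnM, hBm, Matrix.mul_apply]
    simpa using hgk j k
  have hdetA : A.det ≠ 0 := by rw [hA]; exact aux_det_ne_zero g hlig
  -- |det A| ≥ c
  have hAdet_ge : c ≤ |A.det| := by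
    have hfac : A.det = nM.det * Bm.det := by rw [hAmul, Matrix.det_mul]
    have hnMdet : nM.det = (((Matrix.of fun j i => n j i : Matrix (Fin d) (Fin d) ℤ)).det : ℝ) := by
      have h2 := RingHom.map_det (Int.castRingHom ℝ) (Matrix.of fun j i => n j i)
      rw [hnM]
      simpa [RingHom.mapMatrix_apply, Matrix.map] using h2.symm
    have hnM0 : nM.det ≠ 0 := by
      intro h; apply hdetA; rw [hfac, h, zero_mul]
    have hZ0 : ((Matrix.of fun j i => n j i : Matrix (Fin d) (Fin d) ℤ)).det ≠ 0 := by
      intro h; apply hnM0; rw [hnMdet, h, Int.cast_zero]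
    have h1 : (1:ℝ) ≤ |nM.det| := by
      rw [hnMdet, ← Int.cast_abs]
      exact_mod_cast Int.one_le_abs hZ0
    calc c = 1 * c := (one_mul c).symm
      _ ≤ |nM.det| * |Bm.det| := by
          rw [hcdef]
          exact mul_le_mul_of_nonneg_right h1 (abs_nonneg _)
      _ = |A.det| := by rw [hfac, abs_mul]
  -- inner product bound
  set C : ℝ := (ρ ^ ((3:ℝ)^d * α) + (p * ρ ^ α)^2) / 2 with hCdef
  have hC0 : 0 ≤ C := by rw [hCdef]; positivity
  have hinner : ∀ j, |∑ k, g j k * x k| ≤ C := by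
    intro j
    have hxg : ‖x + g j‖ ^ 2 = ‖x‖ ^ 2 + 2 * (inner ℝ x (g j) : ℝ) + ‖g j‖ ^ 2 :=
      norm_add_sq_real x (g j)
    have hIP : (inner ℝ (g j) x : ℝ) = ∑ k, g j k * x k := by
      simp [PiLp.inner_apply, RCLike.inner_apply, conj_trivial, mul_comm]
    have hIP2 : (inner ℝ x (g j) : ℝ) = (inner ℝ (g j) x : ℝ) := real_inner_comm _ _
    have hgsq : ‖g j‖ ^ 2 ≤ (p * ρ ^ α) ^ 2 :=
      pow_le_pow_left₀ (norm_nonneg _) (le_of_lt (hnormg j)) 2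
    have hD := hVg j
    have habs : |(2:ℝ) * (inner ℝ x (g j) : ℝ)| ≤ |‖x‖^2 - ‖x + g j‖^2| + ‖g j‖^2 := by
      have he : (2:ℝ) * (inner ℝ x (g j) : ℝ) = -(‖x‖^2 - ‖x + g j‖^2) - ‖g j‖^2 := by
        rw [hxg]; ring
      rw [he, sub_eq_add_neg]
      refine (abs_add_le _ _).trans ?_
      rw [abs_neg, abs_neg, abs_of_nonneg (sq_nonneg (‖g j‖))]
    rw [← hIP, ← hIP2]
    have h2 : |(2:ℝ) * (inner ℝ x (g j) : ℝ)| = 2 * |(inner ℝ x (g j) : ℝ)| := by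
      rw [abs_mul, abs_of_nonneg (by norm_num : (0:ℝ) ≤ 2)]
    rw [hCdef]
    rw [h2] at habs
    linarith
  -- matrix entry and adjugate bounds
  set K : ℝ := p * ρ ^ α + 1 with hKdef
  have hK1 : 1 ≤ K := by
    rw [hKdef]
    nlinarith [mul_pos hp hρa0]
  have hAK : ∀ j k, |A j k| ≤ K := by
    intro j k
    have h1 : |A j k| ≤ ‖g j‖ := by rw [hA]; exact aux_coord_le_norm (g j) k
    have h2 := hnormg j
    rw [hKdef]; linarith
  have hadj : ∀ k j, |A.adjugate k j| ≤ (d.factorial : ℝ) * K ^ d :=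
    fun k j => aux_adj_abs_le A K hK1 hAK k j
  -- Cramer
  set xv : Fin d → ℝ := fun k => x k with hxv
  have hmv : ∀ j, |A.mulVec xv j| ≤ C := by
    intro j
    have he : A.mulVec xv j = ∑ k, g j k * x k := by
      simp [Matrix.mulVec, dotProduct, hA, hxv]
    rw [he]; exact hinner j
  have hcr : ∀ k, A.det * x k = ∑ j, A.adjugate k j * A.mulVec xv j := by
    intro k
    have h1 : A.det • xv = A.adjugate.mulVec (A.mulVec xv) := by
      rw [Matrix.mulVec_mulVec, Matrix.adjugate_mul, Matrix.smul_mulVec,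
        Matrix.one_mulVec]
    have h2 := congrFun h1 k
    simpa [Pi.smul_apply, smul_eq_mul, hxv, Matrix.mulVec, dotProduct] using h2
  set R : ℝ := (d:ℝ) * ((d.factorial : ℝ) * K ^ d) * C / c with hRdef
  have hxk : ∀ k, |x k| ≤ R := by
    intro k
    have h1 : |A.det * x k| ≤ (d:ℝ) * ((d.factorial : ℝ) * K ^ d) * C := by
      rw [hcr k]
      refine (Finset.abs_sum_le_sum_abs _ _).trans ?_
      have h3 : ∀ j ∈ Finset.univ, |A.adjugate k j * A.mulVec xv j| ≤
          ((d.factorial : ℝ) * K ^ d) * C := by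
        intro j _
        rw [abs_mul]
        exact mul_le_mul (hadj k j) (hmv j) (abs_nonneg _)
          (by positivity)
      refine (Finset.sum_le_sum h3).trans (le_of_eq ?_)
      rw [Finset.sum_const, Finset.card_univ, Fintype.card_fin, nsmul_eq_mul]
      ring
    have h2 : c * |x k| ≤ (d:ℝ) * ((d.factorial : ℝ) * K ^ d) * C := by
      calc c * |x k| ≤ |A.det| * |x k| :=
            mul_le_mul_of_nonneg_right hAdet_ge (abs_nonneg _)
        _ = |A.det * x k| := (abs_mul _ _).symm
        _ ≤ _ := h1
    rw [hRdef, le_div_iff₀ hc0]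
    linarith [h2]
  have hRpos : 0 ≤ R := le_trans (abs_nonneg _) (hxk ⟨0, by omega⟩)
  have hxnorm : ρ ≤ Real.sqrt d * R := by
    have h1 : ρ = Real.sqrt (∑ k, ‖x k‖ ^ 2) := by rw [← hx, EuclideanSpace.norm_eq]
    have h2 : ∑ k, ‖x k‖ ^ 2 ≤ (d:ℝ) * R ^ 2 := by
      calc ∑ k, ‖x k‖ ^ 2 ≤ ∑ _k : Fin d, R ^ 2 := by
            refine Finset.sum_le_sum fun k _ => ?_
            rw [Real.norm_eq_abs]
            exact pow_le_pow_left₀ (abs_nonneg _) (hxk k) 2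
        _ = (d:ℝ) * R ^ 2 := by
            rw [Finset.sum_const, Finset.card_univ, Fintype.card_fin, nsmul_eq_mul]
    calc ρ = Real.sqrt (∑ k, ‖x k‖ ^ 2) := h1
      _ ≤ Real.sqrt ((d:ℝ) * R ^ 2) := Real.sqrt_le_sqrt h2
      _ = Real.sqrt d * R := by
          rw [Real.sqrt_mul (Nat.cast_nonneg d), Real.sqrt_sq hRpos]
  -- numeric endgame
  have hone_le : (1:ℝ) ≤ ρ ^ α := by
    have := Real.rpow_le_rpow_of_exponent_le hρ1 (le_of_lt hα : (0:ℝ) ≤ α)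
    simpa [Real.rpow_zero] using this
  have hKle : K ≤ (p+1) * ρ ^ α := by rw [hKdef]; nlinarith
  have hKd : K ^ d ≤ (p+1)^d * ρ ^ (α * (d:ℝ)) := by
    calc K ^ d ≤ ((p+1) * ρ ^ α) ^ d :=
          pow_le_pow_left₀ (by linarith) hKle d
      _ = (p+1)^d * (ρ ^ α) ^ d := mul_pow _ _ _
      _ = (p+1)^d * ρ ^ (α * (d:ℝ)) := by
          rw [← Real.rpow_natCast (ρ ^ α) d, ← Real.rpow_mul (le_of_lt hρ0)]
  have h3d : (2:ℝ) ≤ 3 ^ d := by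
    calc (2:ℝ) ≤ 3 ^ 1 := by norm_num
      _ ≤ 3 ^ d := pow_le_pow_right₀ (by norm_num) (by omega)
  have hCle : C ≤ (1 + p^2) * ρ ^ ((3:ℝ)^d * α) := by
    have hexp : α * 2 ≤ (3:ℝ)^d * α := by
      have := mul_le_mul_of_nonneg_right h3d (le_of_lt hα)
      linarith
    have h2a : ρ ^ (α * 2) ≤ ρ ^ ((3:ℝ)^d * α) :=
      Real.rpow_le_rpow_of_exponent_le hρ1 hexp
    have h2b : (p * ρ ^ α) ^ 2 = p ^ 2 * ρ ^ (α * 2) := by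
      rw [mul_pow, ← Real.rpow_natCast (ρ ^ α) 2, ← Real.rpow_mul (le_of_lt hρ0)]
      norm_num
    have hCeq : C = (ρ ^ ((3:ℝ)^d * α) + p ^ 2 * ρ ^ (α * 2)) / 2 := by rw [hCdef, h2b]
    nlinarith [mul_le_mul_of_nonneg_left h2a (sq_nonneg p), hρad0]
  have hfinal : ρ ≤ Const * (ρ ^ (α * (d:ℝ)) * ρ ^ ((3:ℝ)^d * α)) := by
    have hKC : K ^ d * C ≤ ((p+1)^d * ρ ^ (α * (d:ℝ))) * ((1+p^2) * ρ ^ ((3:ℝ)^d * α)) :=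
      mul_le_mul hKd hCle hC0 (by positivity)
    have e1 : Real.sqrt d * R =
        (Real.sqrt d * d * (d.factorial : ℝ) / c) * (K ^ d * C) := by
      rw [hRdef]; field_simp
    have e2 : Const * (ρ ^ (α * (d:ℝ)) * ρ ^ ((3:ℝ)^d * α)) =
        (Real.sqrt d * d * (d.factorial : ℝ) / c) *
          (((p+1)^d * ρ ^ (α * (d:ℝ))) * ((1+p^2) * ρ ^ ((3:ℝ)^d * α))) := by
      rw [hConstdef]; field_simp
    calc ρ ≤ Real.sqrt d * R := hxnorm
      _ = _ := e1
      _ ≤ _ := mul_le_mul_of_nonneg_left hKC (by positivity)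
      _ = _ := e2.symm
  have hEsum : (α * (d:ℝ) + (3:ℝ)^d * α) + 2 * α = 1 := by
    rw [hαdef]; field_simp; ring
  have hρE0 : 0 < ρ ^ (α * (d:ℝ) + (3:ℝ)^d * α) := Real.rpow_pos_of_pos hρ0 _
  have hsplit2 : ρ = ρ ^ (α * (d:ℝ) + (3:ℝ)^d * α) * ρ ^ (2 * α) := by
    rw [← Real.rpow_add hρ0, hEsum, Real.rpow_one]
  have hsplitE : ρ ^ (α * (d:ℝ) + (3:ℝ)^d * α) = ρ ^ (α * (d:ℝ)) * ρ ^ ((3:ℝ)^d * α) :=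
    Real.rpow_add hρ0 _ _
  have h2α : ρ ^ (2 * α) ≤ Const := by
    have h5 : ρ ^ (α * (d:ℝ) + (3:ℝ)^d * α) * ρ ^ (2 * α) ≤
        Const * ρ ^ (α * (d:ℝ) + (3:ℝ)^d * α) := by
      rw [← hsplit2, hsplitE]
      exact hfinal
    have h6 : ρ ^ (2 * α) * ρ ^ (α * (d:ℝ) + (3:ℝ)^d * α) ≤
        Const * ρ ^ (α * (d:ℝ) + (3:ℝ)^d * α) := by
      rw [mul_comm (ρ ^ (2*α))]; exact h5
    exact le_of_mul_le_mul_right h6 hρE0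
  have hlow : Const + 1 ≤ ρ ^ (2 * α) := by
    have h0 : ((Const + 1) ^ ((1:ℝ)/(2*α))) ≤ ρ := le_trans (le_max_right _ _) hρ
    have h0' : (0:ℝ) ≤ (Const + 1) ^ ((1:ℝ)/(2*α)) :=
      Real.rpow_nonneg (by linarith) _
    calc Const + 1 = ((Const + 1) ^ ((1:ℝ)/(2*α))) ^ (2*α) := by
          rw [← Real.rpow_mul (by linarith : (0:ℝ) ≤ Const + 1), one_div,
            inv_mul_cancel₀ (ne_of_gt (by positivity : (0:ℝ) < 2*α)), Real.rpow_one]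
      _ ≤ ρ ^ (2*α) := Real.rpow_le_rpow h0' h0 (by positivity)
  linarith
end
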